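/- Assume that for some constant D > 0 the reduced Euler characteristic bound |χ̃(Δ_n)| ≤ D · C^{d_n} (d_n + 1)! holds, where C > 0 is a constant and d_n = dim Δ_n. Then χ̃(Δ_n) = O( n · exp( -A · (log n · log log log n) / (log log n) ) ) for some constant A > 0. -/

import Mathlib

open Real Filter

/-- The simplicial complex `Δ_n` of sets of prime factors of squarefree integers `≤ n`. -/
def DeltaComplex (n : ℕ) : Finset (Finset ℕ) :=
  ((Finset.Icc 1 n).filter Squarefree).image Nat.primeFactors

/-- The reduced Euler characteristic `χ̃(Δ_n) = Σ_{σ ∈ Δ_n} (-1)^{#σ - 1}` (equal to `-M(n)`). -/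
def chiDelta (n : ℕ) : ℤ :=
  ∑ σ ∈ DeltaComplex n, -((-1 : ℤ) ^ σ.card)

/-- The dimension `d_n` of `Δ_n`. -/
def dimDelta (n : ℕ) : ℕ :=
  (((Finset.Icc 1 n).filter Squarefree).sup fun k => k.primeFactors.card) - 1

namespace Stmt19Aux

open Finset

/-- the i-th prime -/
noncomputable def pp (i : ℕ) : ℕ := Nat.nth Nat.Prime i

/-- product of the first m primes -/
noncomputable def QQ (m : ℕ) : ℕ := ∏ i ∈ Finset.range m, pp i

lemma pp_prime (i : ℕ) : (pp i).Prime := Nat.prime_nth_prime i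

lemma pp_mono : Monotone pp := Nat.nth_monotone Nat.infinite_setOf_prime

lemma pp_inj : Function.Injective pp :=
  (Nat.nth_strictMono Nat.infinite_setOf_prime).injective

lemma pp_ge (i : ℕ) : i + 2 ≤ pp i := Nat.add_two_le_nth_prime i

lemma QQ_pos (m : ℕ) : 0 < QQ m :=
  Finset.prod_pos fun i _ => (pp_prime i).pos

lemma squarefree_prod_primes (s : Finset ℕ) (hs : ∀ p ∈ s, p.Prime) :
    Squarefree (∏ p ∈ s, p) := by
  classical
  induction s using Finset.induction_on with
  | empty => simpa using squarefree_one
  | @insert a s ha ih =>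
    rw [Finset.prod_insert ha]
    have ha' : a.Prime := hs a (mem_insert_self a s)
    have hcop : Nat.Coprime a (∏ p ∈ s, p) := by
      rw [Nat.Prime.coprime_iff_not_dvd ha']
      intro hdvd
      obtain ⟨q, hq, hdq⟩ := ha'.prime.exists_mem_finset_dvd hdvd
      have hq' := hs q (mem_insert_of_mem hq)
      rw [(Nat.prime_dvd_prime_iff_eq ha' hq').mp hdq] at ha
      exact ha hq
    exact (Nat.squarefree_mul hcop).mpr
      ⟨ha'.prime.squarefree, ih fun p hp => hs p (mem_insert_of_mem hp)⟩

lemma QQ_eq (m : ℕ) : QQ m = ∏ q ∈ (Finset.range m).image pp, q := by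
  unfold QQ
  rw [Finset.prod_image (fun a _ b _ h => pp_inj h)]

lemma QQ_squarefree (m : ℕ) : Squarefree (QQ m) := by
  rw [QQ_eq]
  refine squarefree_prod_primes _ fun p hp => ?_
  obtain ⟨i, _, rfl⟩ := Finset.mem_image.mp hp
  exact pp_prime i

lemma QQ_primeFactors (m : ℕ) : (QQ m).primeFactors = (Finset.range m).image pp := by
  rw [QQ_eq]
  refine Nat.primeFactors_prod fun p hp => ?_
  obtain ⟨i, _, rfl⟩ := Finset.mem_image.mp hp
  exact pp_prime i

lemma QQ_card (m : ℕ) : (QQ m).primeFactors.card = m := by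
  rw [QQ_primeFactors, Finset.card_image_of_injective _ pp_inj, Finset.card_range]

/-- sorted primes lemma: product of any `m` distinct primes is at least `QQ m`. -/
lemma QQ_le_prod (T : Finset ℕ) (hT : ∀ q ∈ T, q.Prime) : QQ T.card ≤ ∏ q ∈ T, q := by
  classical
  suffices H : ∀ (k : ℕ) (T : Finset ℕ), (∀ q ∈ T, q.Prime) → T.card = k → QQ k ≤ ∏ q ∈ T, q by
    exact H T.card T hT rfl
  intro k
  induction k with
  | zero =>
    intro T hT _
    have : 0 < ∏ q ∈ T, q := Finset.prod_pos fun q hq => (hT q hq).pos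
    simp only [QQ, Finset.range_zero, Finset.prod_empty]
    exact this
  | succ k ih =>
    intro T hT hc
    have hne : T.Nonempty := by rw [← Finset.card_pos, hc]; omega
    set q := T.max' hne with hqdef
    have hqT : q ∈ T := T.max'_mem hne
    have hsub : T ⊆ (range (q + 1)).filter Nat.Prime := by
      intro t ht
      simp only [mem_filter, mem_range]
      exact ⟨Nat.lt_succ_of_le (T.le_max' t ht), hT t ht⟩
    have hcount : k + 1 ≤ Nat.count Nat.Prime (q + 1) := by
      rw [Nat.count_eq_card_filter_range]
      calc k + 1 = T.card := hc.symm
        _ ≤ _ := Finset.card_le_card hsub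
    have hppk : pp k ≤ q := by
      have h := Nat.nth_lt_of_lt_count (p := Nat.Prime) (n := q + 1) (k := k) (by omega)
      unfold pp
      omega
    have herase : (T.erase q).card = k := by rw [Finset.card_erase_of_mem hqT, hc]; omega
    have ih' := ih (T.erase q) (fun p hp => hT p (Finset.mem_of_mem_erase hp)) herase
    calc QQ (k + 1) = QQ k * pp k := Finset.prod_range_succ _ _
      _ ≤ (∏ p ∈ T.erase q, p) * q := Nat.mul_le_mul ih' hppk
      _ = ∏ p ∈ T, p := by rw [mul_comm]; exact Finset.mul_prod_erase T (fun p => p) hqT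

lemma QQ_le_four_pow (m : ℕ) (hm : 1 ≤ m) : QQ m ≤ 4 ^ pp (m - 1) := by
  classical
  have hsub : (Finset.range m).image pp ⊆ (range (pp (m - 1) + 1)).filter Nat.Prime := by
    intro q hq
    obtain ⟨i, hi, rfl⟩ := Finset.mem_image.mp hq
    simp only [mem_filter, mem_range] at *
    exact ⟨Nat.lt_succ_of_le (pp_mono (by omega)), pp_prime i⟩
  calc QQ m = ∏ q ∈ (Finset.range m).image pp, q := QQ_eq m
    _ ≤ ∏ q ∈ (range (pp (m - 1) + 1)).filter Nat.Prime, q :=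
        Finset.prod_le_prod_of_subset_of_one_le' hsub
          (fun i hi _ => (Finset.mem_filter.mp hi).2.one_lt.le)
    _ = primorial (pp (m - 1)) := rfl
    _ ≤ 4 ^ pp (m - 1) := primorial_le_4_pow _

lemma cbin_le (x : ℕ) (hx : 1 ≤ x) :
    x.centralBinom ≤ (2 * x) ^ Nat.count Nat.Prime (2 * x + 1) := by
  classical
  have h1 : x.centralBinom = ∏ p ∈ range (2 * x + 1), p ^ x.centralBinom.factorization p :=
    (Nat.prod_pow_factorization_centralBinom x).symm
  have h2 : ∀ p ∈ range (2 * x + 1),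
      p ^ x.centralBinom.factorization p ≤ if p.Prime then 2 * x else 1 := by
    intro p _
    by_cases hp : p.Prime
    · rw [if_pos hp]
      exact Nat.pow_factorization_choose_le (by omega)
    · rw [if_neg hp, Nat.factorization_eq_zero_of_not_prime _ hp, pow_zero]
  calc x.centralBinom = ∏ p ∈ range (2 * x + 1), p ^ x.centralBinom.factorization p := h1
    _ ≤ ∏ p ∈ range (2 * x + 1), if p.Prime then 2 * x else 1 := Finset.prod_le_prod' h2
    _ = (2 * x) ^ Nat.count Nat.Prime (2 * x + 1) := by
        rw [Finset.prod_ite, Finset.prod_const, Finset.prod_const_one, mul_one,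
          Nat.count_eq_card_filter_range]

/-- Chebyshev lower bound -/
lemma cl (x : ℕ) (hx : 49 ≤ x) :
    (x : ℝ) ≤ (Nat.count Nat.Prime (2 * x + 1) : ℝ) * Real.log (2 * x) := by
  set pc := Nat.count Nat.Prime (2 * x + 1) with hpcdef
  have h1 : (4:ℕ) ^ x < x * x.centralBinom := Nat.four_pow_lt_mul_centralBinom x (by omega)
  have h2 : x * x.centralBinom ≤ x * (2 * x) ^ pc :=
    Nat.mul_le_mul_left x (cbin_le x (by omega))
  have h3 : (4:ℕ) ^ x ≤ (2 * x) ^ (pc + 1) := by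
    calc (4:ℕ) ^ x ≤ x * (2 * x) ^ pc := le_trans h1.le h2
      _ ≤ (2 * x) * (2 * x) ^ pc := Nat.mul_le_mul_right _ (by omega)
      _ = (2 * x) ^ (pc + 1) := (pow_succ' _ _).symm
  have h4 : (4:ℝ) ^ x ≤ ((2 * x : ℕ) : ℝ) ^ (pc + 1) := by exact_mod_cast h3
  have hX49 : (49:ℝ) ≤ (x:ℝ) := by exact_mod_cast hx
  have hx2 : (0:ℝ) < 2 * (x:ℝ) := by linarith
  have h5 : (x:ℝ) * Real.log 4 ≤ ((pc:ℝ) + 1) * Real.log (2 * (x:ℝ)) := by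
    have h := Real.log_le_log (by positivity) h4
    rw [Real.log_pow, Real.log_pow] at h
    push_cast at h
    convert h using 2 <;> norm_num
  set r := Real.sqrt (x:ℝ) with hr
  have hr7 : (7:ℝ) ≤ r := by
    rw [hr]
    exact (Real.le_sqrt (by norm_num) (by linarith)).mpr (by nlinarith)
  have hrr : r * r = (x:ℝ) := Real.mul_self_sqrt (by linarith)
  have hlogX : Real.log (x:ℝ) ≤ 2 * r - 2 := by
    have hlogr : Real.log r ≤ r - 1 := Real.log_le_sub_one_of_pos (by linarith)
    have : Real.log (x:ℝ) = Real.log r + Real.log r := by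
      rw [← Real.log_mul (by linarith) (by linarith), hrr]
    linarith
  have hlog2 : Real.log 2 < 0.6931471808 := Real.log_two_lt_d9
  have hlog4 : (1.386:ℝ) ≤ Real.log 4 := by
    rw [show (4:ℝ) = 2 ^ 2 by norm_num, Real.log_pow]
    push_cast
    nlinarith [Real.log_two_gt_d9]
  have hlog2x : Real.log (2 * (x:ℝ)) = Real.log 2 + Real.log (x:ℝ) :=
    Real.log_mul (by norm_num) (by linarith)
  have hpc0 : (0:ℝ) ≤ (pc:ℝ) := by positivity
  push_cast
  nlinarith [h5, hlog2x, hlogX, hlog2, hlog4, hrr, hr7, hpc0, sq_nonneg (r - 7)]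

lemma cu_nat (s q : ℕ) (h1 : 1 ≤ s) (hsq : s ≤ q) :
    s ^ (Nat.count Nat.Prime (q + 1) - (s + 1)) ≤ 4 ^ q := by
  classical
  set Tq := (range (q + 1)).filter Nat.Prime with hTq
  set Ts := (range (s + 1)).filter Nat.Prime with hTs
  have hsub : Ts ⊆ Tq := Finset.filter_subset_filter _ (Finset.range_subset_range.mpr (by omega))
  set T := Tq \ Ts with hT
  have hcard : Nat.count Nat.Prime (q + 1) - (s + 1) ≤ T.card := by
    have e1 : T.card = Tq.card - Ts.card := Finset.card_sdiff_of_subset hsub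
    have e2 : Ts.card ≤ s + 1 :=
      le_trans (Finset.card_filter_le _ _) (le_of_eq (Finset.card_range _))
    have e3 : Tq.card = Nat.count Nat.Prime (q + 1) := (Nat.count_eq_card_filter_range _ _).symm
    omega
  have hmem : ∀ p ∈ T, s ≤ p := by
    intro p hp
    rw [Finset.mem_sdiff] at hp
    obtain ⟨hpq, hps⟩ := hp
    by_contra hlt
    push_neg at hlt
    exact hps (Finset.mem_filter.mpr
      ⟨Finset.mem_range.mpr (by omega), (Finset.mem_filter.mp hpq).2⟩)
  calc s ^ (Nat.count Nat.Prime (q + 1) - (s + 1)) ≤ s ^ T.card :=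
        Nat.pow_le_pow_right h1 hcard
    _ ≤ ∏ p ∈ T, p := Finset.pow_card_le_prod T _ s hmem
    _ ≤ ∏ p ∈ Tq, p := Finset.prod_le_prod_of_subset_of_one_le' Finset.sdiff_subset
        (fun i hi _ => (Finset.mem_filter.mp hi).2.one_lt.le)
    _ = primorial q := rfl
    _ ≤ 4 ^ q := primorial_le_4_pow q

lemma log_le_sqrt {t : ℝ} (ht : 256 ≤ t) : Real.log t ≤ Real.sqrt t := by
  have ht0 : (0:ℝ) < t := by linarith
  set s := Real.sqrt (Real.sqrt t) with hs
  have hrt : Real.sqrt t = s * s := (Real.mul_self_sqrt (Real.sqrt_nonneg t)).symm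
  have ht' : t = Real.sqrt t * Real.sqrt t := (Real.mul_self_sqrt ht0.le).symm
  have hs4 : (4:ℝ) ≤ s := by
    rw [hs]
    have h16 : (16:ℝ) ≤ Real.sqrt t := by
      rw [show (16:ℝ) = Real.sqrt 256 by
        rw [show (256:ℝ) = 16^2 by norm_num, Real.sqrt_sq (by norm_num)]]
      exact Real.sqrt_le_sqrt ht
    rw [show (4:ℝ) = Real.sqrt 16 by
      rw [show (16:ℝ) = 4^2 by norm_num, Real.sqrt_sq (by norm_num)]]
    exact Real.sqrt_le_sqrt h16
  have hs0 : (0:ℝ) < s := by linarith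
  have hlogt : Real.log t = 4 * Real.log s := by
    rw [ht', hrt, Real.log_mul (by positivity) (by positivity),
      Real.log_mul (by positivity) (by positivity)]
    ring
  have hls : Real.log s ≤ s - 1 := Real.log_le_sub_one_of_pos hs0
  rw [hlogt, hrt]
  nlinarith

/-- Chebyshev upper bound -/
lemma cu (q : ℕ) (hq : 256 ≤ q) :
    (Nat.count Nat.Prime (q + 1) : ℝ) * Real.log q ≤ 8 * q := by
  set s := Nat.sqrt q with hsdef
  have hs16 : 16 ≤ s := Nat.le_sqrt.mpr (by omega)
  set pc := Nat.count Nat.Prime (q + 1) with hpcdef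
  have hQ256 : (256:ℝ) ≤ (q:ℝ) := by exact_mod_cast hq
  have hq0 : (0:ℝ) < (q:ℝ) := by linarith
  have hsq : ((s:ℝ)) ^ 2 ≤ (q:ℝ) := by exact_mod_cast Nat.sqrt_le' q
  have hqs : (q:ℝ) < ((s:ℝ) + 1) ^ 2 := by exact_mod_cast Nat.lt_succ_sqrt' q
  have hs16' : (16:ℝ) ≤ (s:ℝ) := by exact_mod_cast hs16
  have hsqrt : (s:ℝ) ≤ Real.sqrt q := (Real.le_sqrt (by linarith) (by linarith)).mpr hsq
  have hlogQ : Real.log q ≤ Real.sqrt q := log_le_sqrt hQ256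
  have hsqQ : Real.sqrt (q:ℝ) * Real.sqrt (q:ℝ) = (q:ℝ) := Real.mul_self_sqrt hq0.le
  have hsqrtQ_le : Real.sqrt (q:ℝ) ≤ (q:ℝ) := by nlinarith
  have hlogq_pos : 0 < Real.log q := Real.log_pos (by linarith)
  have hssf : (s:ℝ) * Real.sqrt q ≤ (q:ℝ) := by nlinarith
  have haux2 : ((s:ℝ) + 1) * Real.log q ≤ 2 * (q:ℝ) := by
    have h := mul_le_mul_of_nonneg_left hlogQ (by linarith : (0:ℝ) ≤ (s:ℝ) + 1)
    nlinarith
  have hlog4 : Real.log 4 ≤ 1.4 := by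
    rw [show (4:ℝ) = 2 ^ 2 by norm_num, Real.log_pow]
    push_cast
    nlinarith [Real.log_two_lt_d9]
  by_cases hcase : (pc:ℝ) ≤ (s:ℝ) + 1
  · have h1 : (pc:ℝ) * Real.log q ≤ ((s:ℝ) + 1) * Real.log q :=
      mul_le_mul_of_nonneg_right hcase hlogq_pos.le
    linarith
  · push_neg at hcase
    have hpcs : s + 1 ≤ pc := by exact_mod_cast hcase.le
    have hnat := cu_nat s q (by omega) (Nat.sqrt_le_self q)
    have hcastpow : ((s:ℝ)) ^ (pc - (s + 1)) ≤ (4:ℝ) ^ q := by exact_mod_cast hnat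
    have hlogineq : ((pc - (s + 1) : ℕ) : ℝ) * Real.log s ≤ (q:ℝ) * Real.log 4 := by
      have h := Real.log_le_log (by positivity) hcastpow
      rwa [Real.log_pow, Real.log_pow] at h
    have hcastsub : ((pc - (s + 1) : ℕ) : ℝ) = (pc:ℝ) - ((s:ℝ) + 1) := by
      push_cast [Nat.cast_sub hpcs]
      ring
    rw [hcastsub] at hlogineq
    set a := (pc:ℝ) - ((s:ℝ) + 1) with hadef
    have ha0 : 0 ≤ a := by linarith
    have hlogs_pos : 0 < Real.log s := Real.log_pos (by linarith)
    have hlogs : Real.log q / 4 ≤ Real.log s := by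
      have h4s : (q:ℝ) ≤ 4 * (s:ℝ) ^ 2 := by nlinarith
      have h := Real.log_le_log hq0 h4s
      rw [Real.log_mul (by norm_num) (by positivity)] at h
      have hlogsq : Real.log ((s:ℝ) ^ 2) = 2 * Real.log s := by
        rw [Real.log_pow]; push_cast; ring
      rw [hlogsq] at h
      have hlog4q : Real.log 4 ≤ Real.log q / 2 := by
        have h1 : Real.log 16 ≤ Real.log q := Real.log_le_log (by norm_num) (by linarith)
        have h2 : Real.log 16 = 2 * Real.log 4 := by
          rw [show (16:ℝ) = 4 ^ 2 by norm_num, Real.log_pow]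
          push_cast; ring
        linarith
      linarith
    have haux0 : a * Real.log q ≤ a * (4 * Real.log s) :=
      mul_le_mul_of_nonneg_left (by linarith) ha0
    have haux1 : a * Real.log q ≤ 4 * ((q:ℝ) * Real.log 4) := by linarith
    have hsplit : (pc:ℝ) * Real.log q = a * Real.log q + ((s:ℝ) + 1) * Real.log q := by
      rw [hadef]; ring
    nlinarith

/-- lower bound on the i-th prime -/
lemma pp_lb (i : ℕ) (hi : 254 ≤ i) :
    ((i : ℝ) + 1) * Real.log ((i : ℝ) + 2) ≤ 8 * pp i := by
  have hq : 256 ≤ pp i := le_trans (by omega) (pp_ge i)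
  have hcount : Nat.count Nat.Prime (pp i + 1) = i + 1 :=
    Nat.count_nth_succ_of_infinite Nat.infinite_setOf_prime i
  have h := cu (pp i) hq
  rw [hcount] at h
  push_cast at h
  have hi2 : ((i:ℝ) + 2) ≤ (pp i : ℝ) := by exact_mod_cast pp_ge i
  have hmono : Real.log ((i:ℝ) + 2) ≤ Real.log (pp i : ℝ) := Real.log_le_log (by positivity) hi2
  have hi0 : (0:ℝ) ≤ (i:ℝ) + 1 := by positivity
  nlinarith

set_option maxHeartbeats 1000000 in
/-- the key estimate: `log (D C^m m!)` is at most `log QQ m - (m/8) log log m` eventually -/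
lemma key (c0 c1 : ℝ) (hc1 : 0 ≤ c1) :
    ∀ᶠ m : ℕ in atTop,
      c0 + m * c1 + Real.log (m.factorial : ℝ) + ((m : ℝ) / 8) * Real.log (Real.log m)
        ≤ Real.log (QQ m : ℝ) := by
  set K : ℝ := max (8 * (c1 + |c0| + 4)) (Real.log 16) with hKdef
  have hKtend : Tendsto (fun m : ℕ => Real.log (Real.log m)) atTop atTop :=
    (Real.tendsto_log_atTop.comp Real.tendsto_log_atTop).comp tendsto_natCast_atTop_atTop
  filter_upwards [hKtend.eventually_ge_atTop K, eventually_ge_atTop 1000] with m hKm hm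
  set u : ℝ := (m : ℝ) with hudef
  have hu1000 : (1000:ℝ) ≤ u := by rw [hudef]; exact_mod_cast hm
  set h : ℕ := m / 2 with hhdef
  set v : ℝ := (h : ℝ) with hvdef
  have hhm : h ≤ m := Nat.div_le_self m 2
  have h2v : u - 1 ≤ 2 * v := by
    have : m ≤ 2 * (m / 2) + 1 := by omega
    have := (Nat.cast_le (α := ℝ)).mpr this
    push_cast at this
    rw [hudef, hvdef]
    linarith
  have hvu : 2 * v ≤ u := by
    have h2 : 2 * (m / 2) ≤ m := by omega
    rw [hudef, hvdef, hhdef]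
    exact_mod_cast h2
  have h254 : 254 ≤ h := by omega
  have hv254 : (254:ℝ) ≤ v := by rw [hvdef]; exact_mod_cast h254
  -- log of QQ as a sum
  have hQQcast : ((QQ m : ℕ) : ℝ) = ∏ i ∈ Finset.range m, (pp i : ℝ) := by
    rw [QQ]; push_cast; rfl
  have hlogQQ : Real.log (QQ m : ℝ) = ∑ i ∈ Finset.range m, Real.log (pp i : ℝ) := by
    rw [hQQcast]
    exact Real.log_prod fun i _ => by exact_mod_cast (pp_prime i).pos.ne'
  -- split
  have hsplit : ∑ i ∈ Finset.range m, Real.log (pp i : ℝ)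
      = ∑ i ∈ Finset.Ico 0 h, Real.log (pp i : ℝ)
        + ∑ i ∈ Finset.Ico h m, Real.log (pp i : ℝ) := by
    rw [Finset.range_eq_Ico, Finset.sum_Ico_consecutive _ (Nat.zero_le h) hhm]
  have hlogv_pos : (1:ℝ) < Real.log v := by
    have : Real.log (254:ℝ) ≤ Real.log v := Real.log_le_log (by norm_num) hv254
    have h254e : (1:ℝ) < Real.log 254 := by
      rw [show (1:ℝ) = Real.log (Real.exp 1) by rw [Real.log_exp]]
      apply Real.log_lt_log (Real.exp_pos 1)
      have := Real.exp_one_lt_d9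
      linarith
    linarith
  -- lower bound each part
  have hlow1 : ∀ i ∈ Finset.Ico 0 h, Real.log ((i:ℝ) + 1) ≤ Real.log (pp i : ℝ) := by
    intro i _
    apply Real.log_le_log (by positivity)
    have hp := pp_ge i
    have : (i + 1 : ℕ) ≤ pp i := by omega
    exact_mod_cast this
  have hlow2 : ∀ i ∈ Finset.Ico h m,
      Real.log ((i:ℝ) + 1) + (Real.log (Real.log v) - Real.log 8) ≤ Real.log (pp i : ℝ) := by
    intro i hi
    rw [Finset.mem_Ico] at hi
    have hih : h ≤ i := hi.1
    have hi254 : 254 ≤ i := by omega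
    have hlb := pp_lb i hi254
    have hlogi2_pos : (0:ℝ) < Real.log ((i:ℝ) + 2) := by
      apply Real.log_pos
      have : (254:ℝ) ≤ (i:ℝ) := by exact_mod_cast hi254
      linarith
    have hstep : Real.log (((i:ℝ) + 1) * Real.log ((i:ℝ) + 2)) ≤ Real.log (8 * (pp i : ℝ)) := by
      apply Real.log_le_log (by positivity)
      linarith
    rw [Real.log_mul (by positivity) (by positivity),
      Real.log_mul (by norm_num) (by exact_mod_cast (pp_prime i).pos.ne')] at hstep
    have hvi : Real.log (Real.log v) ≤ Real.log (Real.log ((i:ℝ) + 2)) := by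
      apply Real.log_le_log (by linarith)
      apply Real.log_le_log (by linarith)
      have : (h:ℝ) ≤ (i:ℝ) := by exact_mod_cast hih
      rw [hvdef]
      linarith
    linarith
  have hsum1 : ∑ i ∈ Finset.Ico 0 h, Real.log ((i:ℝ) + 1)
      ≤ ∑ i ∈ Finset.Ico 0 h, Real.log (pp i : ℝ) := Finset.sum_le_sum hlow1
  have hsum2 : ∑ i ∈ Finset.Ico h m, (Real.log ((i:ℝ) + 1)
        + (Real.log (Real.log v) - Real.log 8))
      ≤ ∑ i ∈ Finset.Ico h m, Real.log (pp i : ℝ) := Finset.sum_le_sum hlow2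
  have hsum2' : ∑ i ∈ Finset.Ico h m, (Real.log ((i:ℝ) + 1)
        + (Real.log (Real.log v) - Real.log 8))
      = ∑ i ∈ Finset.Ico h m, Real.log ((i:ℝ) + 1)
        + ((m - h : ℕ) : ℝ) * (Real.log (Real.log v) - Real.log 8) := by
    rw [Finset.sum_add_distrib, Finset.sum_const, Nat.card_Ico, nsmul_eq_mul]
  -- factorial
  have hfact : Real.log (m.factorial : ℝ) = ∑ i ∈ Finset.range m, Real.log ((i:ℝ) + 1) := by
    have hcast : (m.factorial : ℝ) = ∏ i ∈ Finset.range m, ((i:ℝ) + 1) := by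
      rw [← Finset.prod_range_add_one_eq_factorial]
      push_cast
      rfl
    rw [hcast]
    exact Real.log_prod fun i _ => by positivity
  have hfact_split : ∑ i ∈ Finset.range m, Real.log ((i:ℝ) + 1)
      = ∑ i ∈ Finset.Ico 0 h, Real.log ((i:ℝ) + 1)
        + ∑ i ∈ Finset.Ico h m, Real.log ((i:ℝ) + 1) := by
    rw [Finset.range_eq_Ico, Finset.sum_Ico_consecutive _ (Nat.zero_le h) hhm]
  -- main lower bound
  have hmain : Real.log (m.factorial : ℝ)
      + ((m - h : ℕ) : ℝ) * (Real.log (Real.log v) - Real.log 8)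
      ≤ Real.log (QQ m : ℝ) := by
    rw [hlogQQ, hsplit, hfact, hfact_split]
    linarith [hsum1, hsum2, hsum2'.symm.le, hsum2'.le]
  -- now the arithmetic
  set W : ℝ := Real.log (Real.log u) with hWdef
  have hKW : K ≤ W := hKm
  have hW16 : Real.log 16 ≤ W := le_trans (le_max_right _ _) hKW
  have hW8 : 8 * (c1 + |c0| + 4) ≤ W := le_trans (le_max_left _ _) hKW
  have hlogu_pos : (0:ℝ) < Real.log u := Real.log_pos (by linarith)
  -- Wv ≥ W - log 2
  have hWv : W - Real.log 2 ≤ Real.log (Real.log v) := by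
    have hvu4 : u / 4 ≤ v := by linarith
    have hlogv : Real.log u - Real.log 4 ≤ Real.log v := by
      have := Real.log_le_log (by linarith : (0:ℝ) < u / 4) hvu4
      rw [Real.log_div (by linarith) (by norm_num)] at this
      linarith
    have hlogu16 : 2 * Real.log 4 ≤ Real.log u := by
      have h1 : Real.log 16 ≤ Real.log u := Real.log_le_log (by norm_num) (by linarith)
      have h2 : Real.log 16 = 2 * Real.log 4 := by
        rw [show (16:ℝ) = 4 ^ 2 by norm_num, Real.log_pow]; push_cast; ring
      linarith
    have hhalf : Real.log u / 2 ≤ Real.log v := by linarith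
    have : Real.log (Real.log u / 2) ≤ Real.log (Real.log v) :=
      Real.log_le_log (by linarith) hhalf
    rw [Real.log_div hlogu_pos.ne' (by norm_num)] at this
    rw [hWdef]
    linarith
  -- cardinality
  have hcard : u / 2 ≤ ((m - h : ℕ) : ℝ) := by
    have : ((m - h : ℕ) : ℝ) = u - v := by
      rw [hudef, hvdef]
      push_cast [Nat.cast_sub hhm]
      ring
    linarith
  -- numeric log facts
  have hlog2 : Real.log 2 < 0.6931471808 := Real.log_two_lt_d9
  have hlog2_pos : (0:ℝ) < Real.log 2 := Real.log_pos (by norm_num)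
  have hlog8 : Real.log 8 = 3 * Real.log 2 := by
    rw [show (8:ℝ) = 2 ^ 3 by norm_num, Real.log_pow]; push_cast; ring
  have hlog16 : Real.log 16 = 4 * Real.log 2 := by
    rw [show (16:ℝ) = 2 ^ 4 by norm_num, Real.log_pow]; push_cast; ring
  have hWv8 : W - Real.log 16 ≤ Real.log (Real.log v) - Real.log 8 := by
    rw [hlog16, hlog8]
    linarith
  have hWv8_nonneg : 0 ≤ Real.log (Real.log v) - Real.log 8 := by linarith
  have hterm : u / 2 * (W - Real.log 16)
      ≤ ((m - h : ℕ) : ℝ) * (Real.log (Real.log v) - Real.log 8) := by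
    have h1 : u / 2 * (W - Real.log 16) ≤ ((m - h : ℕ) : ℝ) * (W - Real.log 16) :=
      mul_le_mul_of_nonneg_right hcard (by rw [hlog16]; linarith)
    have h2 : ((m - h : ℕ) : ℝ) * (W - Real.log 16)
        ≤ ((m - h : ℕ) : ℝ) * (Real.log (Real.log v) - Real.log 8) :=
      mul_le_mul_of_nonneg_left hWv8 (by positivity)
    linarith
  have habs : c0 ≤ |c0| := le_abs_self c0
  have habs0 : 0 ≤ |c0| := abs_nonneg c0
  have hfinal : c0 + u * c1 + (u / 8) * W ≤ u / 2 * (W - Real.log 16) := by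
    have hu0 : (0:ℝ) ≤ u := by linarith
    have hlog16' : Real.log 16 ≤ 2.8 := by rw [hlog16]; linarith
    have e1 : u * (8 * (c1 + |c0| + 4)) ≤ u * W := mul_le_mul_of_nonneg_left hW8 hu0
    have e2 : (0:ℝ) ≤ (u - 1) * |c0| := mul_nonneg (by linarith) habs0
    have e3 : u * Real.log 16 ≤ u * 2.8 := mul_le_mul_of_nonneg_left hlog16' hu0
    have e4 : (0:ℝ) ≤ u * c1 := mul_nonneg hu0 hc1
    linarith
  calc c0 + u * c1 + Real.log (m.factorial : ℝ) + (u / 8) * W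
      ≤ Real.log (m.factorial : ℝ) + u / 2 * (W - Real.log 16) := by linarith
    _ ≤ Real.log (m.factorial : ℝ)
        + ((m - h : ℕ) : ℝ) * (Real.log (Real.log v) - Real.log 8) := by linarith
    _ ≤ Real.log (QQ m : ℝ) := hmain

/-- the max number of prime factors of a squarefree number `≤ n` -/
def SS (n : ℕ) : ℕ := ((Finset.Icc 1 n).filter Squarefree).sup fun k => k.primeFactors.card

lemma SS_ge (n m : ℕ) (h : QQ m ≤ n) : m ≤ SS n := by
  classical
  have hmem : QQ m ∈ (Finset.Icc 1 n).filter Squarefree :=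
    Finset.mem_filter.mpr ⟨Finset.mem_Icc.mpr ⟨QQ_pos m, h⟩, QQ_squarefree m⟩
  have h2 := Finset.le_sup (f := fun k => k.primeFactors.card) hmem
  unfold SS
  simpa [QQ_card] using h2

lemma one_le_SS (n : ℕ) (hn : 2 ≤ n) : 1 ≤ SS n := by
  classical
  have hmem : 2 ∈ (Finset.Icc 1 n).filter Squarefree :=
    Finset.mem_filter.mpr ⟨Finset.mem_Icc.mpr ⟨one_le_two, hn⟩, Nat.prime_two.prime.squarefree⟩
  have h2 := Finset.le_sup (f := fun k => k.primeFactors.card) hmem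
  unfold SS
  simpa [Nat.Prime.primeFactors Nat.prime_two] using h2

lemma QQ_SS_le (n : ℕ) (hn : 2 ≤ n) : QQ (SS n) ≤ n := by
  classical
  have hne : ((Finset.Icc 1 n).filter Squarefree).Nonempty :=
    ⟨1, Finset.mem_filter.mpr ⟨Finset.mem_Icc.mpr ⟨le_refl 1, by omega⟩, squarefree_one⟩⟩
  obtain ⟨k, hk, hsup⟩ := Finset.exists_mem_eq_sup _ hne fun k => k.primeFactors.card
  rw [Finset.mem_filter, Finset.mem_Icc] at hk
  have hQQ : QQ (SS n) ≤ ∏ p ∈ k.primeFactors, p := by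
    rw [show SS n = k.primeFactors.card from hsup]
    exact QQ_le_prod _ fun q hq => Nat.prime_of_mem_primeFactors hq
  rw [Nat.prod_primeFactors_of_squarefree hk.2] at hQQ
  exact hQQ.trans hk.1.2

lemma dimDelta_add_one (n : ℕ) (hn : 2 ≤ n) : dimDelta n + 1 = SS n := by
  have := one_le_SS n hn
  unfold dimDelta
  unfold SS at *
  omega

/-- lower bound for `SS n` -/
lemma SS_lb (n : ℕ) (hL : 10 ^ 6 ≤ Real.log n) :
    Real.log n / (8 * Real.log (Real.log n)) ≤ (SS n : ℝ) := by
  set L := Real.log n with hLdef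
  have hL0 : (0:ℝ) < L := by norm_num at hL ⊢; linarith
  have hn2 : 2 ≤ n := by
    by_contra hc
    push_neg at hc
    interval_cases n <;> simp [hLdef] at hL0 <;> linarith [hL0]
  set x := ⌊L⌋₊ / 4 with hxdef
  have hfloor : 10 ^ 6 ≤ ⌊L⌋₊ := Nat.le_floor (by exact_mod_cast hL)
  have hx49 : 49 ≤ x := by omega
  set pc := Nat.count Nat.Prime (2 * x + 1) with hpcdef
  have hcl : (x:ℝ) ≤ (pc : ℝ) * Real.log (2 * x) := cl x hx49
  have hx49' : (49:ℝ) ≤ (x:ℝ) := by exact_mod_cast hx49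
  have hx0 : (0:ℝ) < (x:ℝ) := by linarith
  have hpc1 : 1 ≤ pc := by
    by_contra hc
    push_neg at hc
    have : pc = 0 := by omega
    rw [this] at hcl
    norm_num at hcl
    linarith
  have hpp2x : pp (pc - 1) ≤ 2 * x := by
    have h := Nat.nth_lt_of_lt_count (p := Nat.Prime) (n := 2 * x + 1) (k := pc - 1) (by omega)
    unfold pp
    omega
  have hQQ4 : QQ pc ≤ 4 ^ (2 * x) :=
    le_trans (QQ_le_four_pow pc hpc1) (Nat.pow_le_pow_right (by norm_num) hpp2x)
  have hxL : (x:ℝ) ≤ L / 4 := by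
    calc (x:ℝ) ≤ (⌊L⌋₊ : ℝ) / 4 := by
          rw [hxdef]
          exact_mod_cast Nat.cast_div_le
      _ ≤ L / 4 := by
          have := Nat.floor_le hL0.le
          linarith
  have hlog4 : Real.log 4 ≤ 1.4 := by
    rw [show (4:ℝ) = 2 ^ 2 by norm_num, Real.log_pow]
    push_cast
    nlinarith [Real.log_two_lt_d9]
  have hlog4_pos : (0:ℝ) < Real.log 4 := Real.log_pos (by norm_num)
  have h4n : ((4 ^ (2 * x) : ℕ) : ℝ) ≤ (n : ℝ) := by
    have hexp : ((4 ^ (2 * x) : ℕ) : ℝ) = Real.exp ((2 * x : ℕ) * Real.log 4) := by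
      rw [Real.exp_nat_mul, Real.exp_log (by norm_num : (0:ℝ) < 4)]
      push_cast
      ring
    rw [hexp]
    have harg : ((2 * x : ℕ) : ℝ) * Real.log 4 ≤ L := by
      push_cast
      nlinarith
    calc Real.exp (((2 * x : ℕ) : ℝ) * Real.log 4) ≤ Real.exp L := Real.exp_le_exp.mpr harg
      _ = n := by rw [hLdef, Real.exp_log (by positivity : (0:ℝ) < (n:ℝ))]
  have hQQn : QQ pc ≤ n := by
    have h := le_trans (Nat.cast_le.mpr hQQ4) h4n
    exact_mod_cast h
  have hSS : pc ≤ SS n := SS_ge n pc hQQn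
  -- final comparison
  have hlogL_pos : (0:ℝ) < Real.log L := Real.log_pos (by linarith)
  have h2x_pos : (0:ℝ) < 2 * (x:ℝ) := by linarith
  have hlog2x_pos : (0:ℝ) < Real.log (2 * (x:ℝ)) := Real.log_pos (by linarith)
  have hlog2xL : Real.log (2 * (x:ℝ)) ≤ Real.log L := Real.log_le_log h2x_pos (by linarith)
  have hx8 : L / 8 ≤ (x:ℝ) := by
    have h1 : (⌊L⌋₊ : ℝ) ≤ 4 * (x:ℝ) + 3 := by
      have : ⌊L⌋₊ ≤ 4 * x + 3 := by omega
      exact_mod_cast this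
    have h2 : L - 1 ≤ (⌊L⌋₊ : ℝ) := by
      have := Nat.lt_floor_add_one L
      linarith
    norm_num at hL
    linarith
  have hpc_lb : (x:ℝ) / Real.log (2 * (x:ℝ)) ≤ (pc : ℝ) := by
    rw [div_le_iff₀ hlog2x_pos]
    exact hcl
  calc L / (8 * Real.log L) = (L / 8) / Real.log L := by ring
    _ ≤ (x:ℝ) / Real.log (2 * (x:ℝ)) := by
        apply div_le_div₀ hx0.le hx8 hlog2x_pos hlog2xL
    _ ≤ (pc : ℝ) := hpc_lb
    _ ≤ (SS n : ℝ) := by exact_mod_cast hSS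

end Stmt19Aux

set_option maxHeartbeats 2000000 in
/-- If `|χ̃(Δ_n)| ≤ D · C^{d_n} · (d_n + 1)!` for constants `C, D > 0`, then
`χ̃(Δ_n) = O(n · exp(-A · log n · log log log n / log log n))` for some `A > 0`. -/
theorem stmt19 (C D : ℝ) (hC : 0 < C) (hD : 0 < D)
    (hyp : ∀ n : ℕ, 2 ≤ n →
      |(chiDelta n : ℝ)| ≤ D * C ^ dimDelta n * ((dimDelta n + 1).factorial : ℝ)) :
    ∃ A : ℝ, 0 < A ∧
      (fun n : ℕ => (chiDelta n : ℝ))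
        =O[atTop] fun n : ℕ =>
          (n : ℝ) * Real.exp (-A * (Real.log n * Real.log (Real.log (Real.log n)))
            / Real.log (Real.log n)) := by
  classical
  have hC'1 : (1:ℝ) ≤ max C 1 := le_max_right _ _
  have hCC' : C ≤ max C 1 := le_max_left _ _
  set C' : ℝ := max C 1 with hC'def
  have hC'pos : (0:ℝ) < C' := lt_of_lt_of_le one_pos hC'1
  set c1 := Real.log C' with hc1def
  have hc1 : 0 ≤ c1 := Real.log_nonneg hC'1
  refine ⟨1/128, by norm_num, ?_⟩
  rw [Asymptotics.isBigO_iff]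
  refine ⟨1, ?_⟩
  have hlogT : Tendsto (fun n : ℕ => Real.log n) atTop atTop :=
    Real.tendsto_log_atTop.comp tendsto_natCast_atTop_atTop
  have hlog2T : Tendsto (fun n : ℕ => Real.log (Real.log n)) atTop atTop :=
    Real.tendsto_log_atTop.comp hlogT
  have hlog3T : Tendsto (fun n : ℕ => Real.log (Real.log (Real.log n))) atTop atTop :=
    Real.tendsto_log_atTop.comp hlog2T
  have hmlb : ∀ᶠ n : ℕ in atTop,
      Real.log n / (8 * Real.log (Real.log n)) ≤ (Stmt19Aux.SS n : ℝ) :=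
    (hlogT.eventually_ge_atTop (10 ^ 6)).mono fun n h => Stmt19Aux.SS_lb n h
  have hmT : Tendsto (fun n : ℕ => Stmt19Aux.SS n) atTop atTop := by
    rw [← tendsto_natCast_atTop_iff (R := ℝ)]
    rw [tendsto_atTop]
    intro b
    filter_upwards [hmlb, hlogT.eventually_ge_atTop (max 256 (64 * (max b 0 + 1) ^ 2))]
      with n h1 h2
    set L := Real.log n with hLdef
    have hL256 : (256:ℝ) ≤ L := le_trans (le_max_left _ _) h2
    have hLb : 64 * (max b 0 + 1) ^ 2 ≤ L := le_trans (le_max_right _ _) h2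
    have hsq : Real.log L ≤ Real.sqrt L := Stmt19Aux.log_le_sqrt hL256
    have hL2pos : (0:ℝ) < Real.log L := Real.log_pos (by linarith)
    have hsqrt_pos : (0:ℝ) < Real.sqrt L := lt_of_lt_of_le hL2pos hsq
    have hmb0 : (0:ℝ) ≤ max b 0 := le_max_right _ _
    have hs8b : 8 * (max b 0 + 1) ≤ Real.sqrt L := by
      apply (Real.le_sqrt (by positivity) (by linarith)).mpr
      ring_nf
      ring_nf at hLb
      linarith
    have hss : Real.sqrt L * Real.sqrt L = L := Real.mul_self_sqrt (by linarith)
    have hd : L / (8 * Real.sqrt L) ≤ L / (8 * Real.log L) :=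
      div_le_div_of_nonneg_left (by linarith) (by linarith) (by linarith)
    have hLsq : L / (8 * Real.sqrt L) = Real.sqrt L / 8 := by
      rw [div_eq_div_iff (by linarith) (by norm_num)]
      linear_combination 8 * hss.symm
    have hb' : b ≤ Real.sqrt L / 8 := by
      have : b ≤ max b 0 := le_max_left _ _
      linarith
    calc b ≤ Real.sqrt L / 8 := hb'
      _ = L / (8 * Real.sqrt L) := hLsq.symm
      _ ≤ L / (8 * Real.log L) := hd
      _ ≤ (Stmt19Aux.SS n : ℝ) := h1
  have hkeyev := hmT.eventually (Stmt19Aux.key (Real.log D) c1 hc1)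
  filter_upwards [eventually_ge_atTop 2, hlogT.eventually_ge_atTop (10 ^ 6),
    hlog2T.eventually_ge_atTop 256, hlog3T.eventually_ge_atTop 2, hmlb, hkeyev]
    with n hn2 hL hL2 hL3 hm hkey
  set m := Stmt19Aux.SS n with hmdef
  set L := Real.log n with hLdef
  have hn0 : (0:ℝ) < (n:ℝ) := by
    have : (2:ℝ) ≤ (n:ℝ) := by exact_mod_cast hn2
    linarith
  have hLpos : (0:ℝ) < L := by norm_num at hL; linarith
  have hL2pos : (0:ℝ) < Real.log L := by linarith
  have hu_lb : L / (8 * Real.log L) ≤ (m:ℝ) := hm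
  have hupos : (0:ℝ) < (m:ℝ) := lt_of_lt_of_le (by positivity) hu_lb
  -- step 1 : hypothesis bound with uniform constants
  have hdim1 : dimDelta n + 1 = m := Stmt19Aux.dimDelta_add_one n hn2
  have hfp : (0:ℝ) < (m.factorial : ℝ) := by exact_mod_cast m.factorial_pos
  have h1 : |(chiDelta n : ℝ)| ≤ D * C' ^ m * (m.factorial : ℝ) := by
    refine (hyp n hn2).trans ?_
    rw [hdim1]
    have hpow : C ^ dimDelta n ≤ C' ^ m := by
      calc C ^ dimDelta n ≤ C' ^ dimDelta n := pow_le_pow_left₀ hC.le hCC' _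
        _ ≤ C' ^ m := pow_le_pow_right₀ hC'1 (by omega)
    exact mul_le_mul_of_nonneg_right (mul_le_mul_of_nonneg_left hpow hD.le) hfp.le
  have hpos : (0:ℝ) < D * C' ^ m * (m.factorial : ℝ) :=
    mul_pos (mul_pos hD (pow_pos hC'pos m)) hfp
  have hlogDCm : Real.log (D * C' ^ m * (m.factorial : ℝ))
      = Real.log D + (m:ℝ) * c1 + Real.log (m.factorial : ℝ) := by
    rw [Real.log_mul (mul_pos hD (pow_pos hC'pos m)).ne' hfp.ne',
      Real.log_mul hD.ne' (pow_ne_zero m hC'pos.ne'), Real.log_pow, hc1def]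
  set W := Real.log (Real.log (m:ℝ)) with hWdef
  have hkey2 : Real.log D + (m:ℝ) * c1 + Real.log (m.factorial : ℝ) + ((m:ℝ) / 8) * W
      ≤ Real.log ((Stmt19Aux.QQ m : ℕ) : ℝ) := hkey
  have hQQle : Real.log ((Stmt19Aux.QQ m : ℕ) : ℝ) ≤ L := by
    rw [hLdef]
    apply Real.log_le_log (by exact_mod_cast (Stmt19Aux.QQ_pos m))
    exact_mod_cast Stmt19Aux.QQ_SS_le n hn2
  -- lower bound for W
  have hlogm_lb : Real.log L / 2 ≤ Real.log (m:ℝ) := by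
    have hlog8L2 : Real.log (8 * Real.log L) ≤ Real.log L / 2 := by
      rw [Real.log_mul (by norm_num) hL2pos.ne']
      have hsq : Real.log (Real.log L) ≤ Real.sqrt (Real.log L) :=
        Stmt19Aux.log_le_sqrt (by linarith)
      have hss : Real.sqrt (Real.log L) * Real.sqrt (Real.log L) = Real.log L :=
        Real.mul_self_sqrt hL2pos.le
      have h4 : (4:ℝ) ≤ Real.sqrt (Real.log L) := by
        apply (Real.le_sqrt (by norm_num) hL2pos.le).mpr
        norm_num
        linarith
      have hsq4 : Real.sqrt (Real.log L) ≤ Real.log L / 4 := by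
        have h5 := mul_le_mul_of_nonneg_left h4 (Real.sqrt_nonneg (Real.log L))
        linarith
      have hlog8 : Real.log 8 ≤ 2.1 := by
        rw [show (8:ℝ) = 2 ^ 3 by norm_num, Real.log_pow]
        push_cast
        linarith [Real.log_two_lt_d9]
      linarith
    have hlogm : Real.log (L / (8 * Real.log L)) ≤ Real.log (m:ℝ) :=
      Real.log_le_log (by positivity) hu_lb
    rw [Real.log_div hLpos.ne' (by positivity)] at hlogm
    linarith
  have hW_lb : Real.log (Real.log L) / 2 ≤ W := by
    have h1' : Real.log (Real.log L / 2) ≤ W := by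
      rw [hWdef]
      exact Real.log_le_log (by linarith) hlogm_lb
    rw [Real.log_div hL2pos.ne' (by norm_num)] at h1'
    have hlog2 : Real.log 2 ≤ 1 := by linarith [Real.log_two_lt_d9]
    linarith
  have hW0 : (0:ℝ) ≤ W := by linarith
  have hprod : L * Real.log (Real.log L) / (128 * Real.log L) ≤ ((m:ℝ) / 8) * W := by
    have e1 : L / (8 * Real.log L) / 8 * (Real.log (Real.log L) / 2) ≤ ((m:ℝ) / 8) * W := by
      apply mul_le_mul (by linarith) hW_lb (by linarith) (by positivity)
    calc L * Real.log (Real.log L) / (128 * Real.log L)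
        = L / (8 * Real.log L) / 8 * (Real.log (Real.log L) / 2) := by
          field_simp
          ring
      _ ≤ ((m:ℝ) / 8) * W := e1
  have hchain : |(chiDelta n : ℝ)|
      ≤ Real.exp (L - L * Real.log (Real.log L) / (128 * Real.log L)) := by
    calc |(chiDelta n : ℝ)| ≤ D * C' ^ m * (m.factorial : ℝ) := h1
      _ = Real.exp (Real.log (D * C' ^ m * (m.factorial : ℝ))) := (Real.exp_log hpos).symm
      _ ≤ Real.exp (L - L * Real.log (Real.log L) / (128 * Real.log L)) := by
          apply Real.exp_le_exp.mpr
          rw [hlogDCm]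
          linarith
  simp only [Real.norm_eq_abs, one_mul]
  have hRHSpos : (0:ℝ) ≤ (n:ℝ) * Real.exp (-(1/128) * (L * Real.log (Real.log L)) / Real.log L) := by
    positivity
  rw [abs_of_nonneg hRHSpos]
  refine hchain.trans (le_of_eq ?_)
  have harg : L - L * Real.log (Real.log L) / (128 * Real.log L)
      = L + -(1/128) * (L * Real.log (Real.log L)) / Real.log L := by
    field_simp
    ring
  rw [harg, Real.exp_add, Real.exp_log hn0]
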